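/- arXiv:2302.06191 — 4 statements merged into one kernel-verified Lean document; each statement's English description precedes it below -/
import Mathlib

section
/- Under the geometric Wasserstein convergence hypothesis (uniform in the initial measure), for every Hölder continuous g: X → ℂ with E_{ν_inv}(g) = 0, the Poisson equation (Id − Π)g̃ = g admits a continuous solution g̃, and any two continuous solutions differ by an additive constant. -/
open MeasureTheory

/-- The `n`-step action of a Markov kernel on measures: `ν ↦ ν Π^n`. -/
noncomputable def iterKer {X : Type*} [MeasurableSpace X] (K : X → Measure X) :
    ℕ → Measure X → Measure X
  | 0, ν => ν
  | n + 1, ν => (iterKer K n ν).bind K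

/-- Wasserstein-1 distance via couplings. -/
noncomputable def W1 {X : Type*} [MeasurableSpace X] [PseudoMetricSpace X]
    (P Q : Measure X) : ℝ :=
  sInf {r | ∃ π : Measure (X × X), π.map Prod.fst = P ∧ π.map Prod.snd = Q ∧
    r = ∫ p, dist p.1 p.2 ∂π}

set_option linter.unusedSectionVars false
set_option linter.unusedVariables false

section Aux

variable {X : Type*} [MetricSpace X] [CompactSpace X] [MeasurableSpace X] [BorelSpace X]
  (K : X → Measure X)

lemma contInt {Y : Type*} [TopologicalSpace Y] [CompactSpace Y] [T2Space Y] [MeasurableSpace Y]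
    [OpensMeasurableSpace Y] {E : Type*} [NormedAddCommGroup E]
    (ν : Measure Y) [IsFiniteMeasure ν] {f : Y → E} (hf : Continuous f) :
    Integrable f ν :=
  hf.integrable_of_hasCompactSupport (HasCompactSupport.of_compactSpace f)

lemma bindProb (hKprob : ∀ x, IsProbabilityMeasure (K x)) (hKmeas : Measurable K)
    (ν : Measure X) (hν : IsProbabilityMeasure ν) : IsProbabilityMeasure (ν.bind K) := by
  constructor
  rw [Measure.bind_apply MeasurableSet.univ hKmeas.aemeasurable]
  simp only [(hKprob _).measure_univ]
  simp [hν.measure_univ]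

lemma iterKerProb (hKprob : ∀ x, IsProbabilityMeasure (K x)) (hKmeas : Measurable K)
    (ν : Measure X) (hν : IsProbabilityMeasure ν) (n : ℕ) :
    IsProbabilityMeasure (iterKer K n ν) := by
  induction n with
  | zero => exact hν
  | succ n ih => exact bindProb K hKprob hKmeas _ ih

lemma integral_bind_cont (hKprob : ∀ x, IsProbabilityMeasure (K x)) (hKmeas : Measurable K)
    (ν : Measure X) (hν : IsProbabilityMeasure ν) {f : X → ℂ} (hf : Continuous f) :
    ∫ y, f y ∂(ν.bind K) = ∫ x, ∫ y, f y ∂(K x) ∂ν := by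
  haveI := hν
  let κ : ProbabilityTheory.Kernel X X := ⟨K, hKmeas⟩
  haveI : ProbabilityTheory.IsMarkovKernel κ := ⟨hKprob⟩
  have hmap : (ν.compProd κ).map Prod.snd = ν.bind K := by
    ext s hs
    rw [Measure.map_apply measurable_snd hs, Measure.compProd_apply (measurable_snd hs),
      Measure.bind_apply hs hKmeas.aemeasurable]
    rfl
  have hint : Integrable (fun p : X × X => f p.2) (ν.compProd κ) :=
    contInt _ (hf.comp continuous_snd)
  rw [← hmap, integral_map measurable_snd.aemeasurable hf.aestronglyMeasurable,
    Measure.integral_compProd hint]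
  rfl

noncomputable def Pop (K : X → Measure X) (f : X → ℂ) : X → ℂ := fun x => ∫ y, f y ∂(K x)

lemma PopIterCont (hFeller : ∀ f : X → ℂ, Continuous f → Continuous fun x => ∫ y, f y ∂(K x))
    {f : X → ℂ} (hf : Continuous f) (k : ℕ) : Continuous ((Pop K)^[k] f) := by
  induction k with
  | zero => exact hf
  | succ k ih => rw [Function.iterate_succ_apply']; exact hFeller _ ih

lemma integral_iterKer (hKprob : ∀ x, IsProbabilityMeasure (K x)) (hKmeas : Measurable K)
    (hFeller : ∀ f : X → ℂ, Continuous f → Continuous fun x => ∫ y, f y ∂(K x))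
    (k : ℕ) :
    ∀ (f : X → ℂ), Continuous f → ∀ (ν : Measure X), IsProbabilityMeasure ν →
    ∫ y, f y ∂(iterKer K k ν) = ∫ x, (Pop K)^[k] f x ∂ν := by
  induction k with
  | zero => intro f hf ν hν; rfl
  | succ k ih =>
    intro f hf ν hν
    have h1 : iterKer K (k+1) ν = (iterKer K k ν).bind K := rfl
    rw [h1, integral_bind_cont K hKprob hKmeas _ (iterKerProb K hKprob hKmeas ν hν k) hf]
    have h2 : (fun x => ∫ y, f y ∂(K x)) = Pop K f := rfl
    rw [h2, ih (Pop K f) (hFeller f hf) ν hν, ← Function.iterate_succ_apply]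

lemma iterKer_add (hKmeas : Measurable K) (a b : ℕ) (ν : Measure X) :
    iterKer K (a + b) ν = iterKer K b (iterKer K a ν) := by
  induction b with
  | zero => rfl
  | succ b ih => show (iterKer K (a+b) ν).bind K = _ ; rw [ih]; rfl


lemma rpow_delta {t δ : ℝ} (ht : 0 ≤ t) (hδ : 0 < δ) {α : ℝ} (hα0 : 0 < α) (hα1 : α ≤ 1) :
    t ^ α ≤ δ ^ α + δ ^ (α - 1) * t := by
  rcases le_or_gt t δ with h | h
  · have h1 : t ^ α ≤ δ ^ α := Real.rpow_le_rpow ht h hα0.le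
    have h2 : 0 ≤ δ ^ (α - 1) * t := mul_nonneg (Real.rpow_nonneg hδ.le _) ht
    linarith
  · have ht0 : 0 < t := hδ.trans h
    have h1 : t ^ (α - 1) ≤ δ ^ (α - 1) :=
      Real.rpow_le_rpow_of_nonpos hδ h.le (by linarith)
    have h2 : t ^ α = t ^ (α - 1) * t := by
      have h4 := Real.rpow_add_one ht0.ne' (α - 1)
      rw [sub_add_cancel] at h4
      exact h4
    rw [h2]
    have h3 : t ^ (α - 1) * t ≤ δ ^ (α - 1) * t := by
      exact mul_le_mul_of_nonneg_right h1 ht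
    exact h3.trans (by nlinarith [Real.rpow_nonneg hδ.le α])

lemma coupling_bound {g : X → ℂ} (hgc : Continuous g) {α Kg' : ℝ}
    (hα0 : 0 < α) (hα1 : α ≤ 1) (hKg' : 0 ≤ Kg')
    (hg : ∀ x y, ‖g x - g y‖ ≤ Kg' * dist x y ^ α)
    (P Q : Measure X) (hP : IsProbabilityMeasure P) (hQ : IsProbabilityMeasure Q)
    (π : Measure (X × X)) (hfst : π.map Prod.fst = P) (hsnd : π.map Prod.snd = Q) :
    ‖(∫ x, g x ∂P) - ∫ x, g x ∂Q‖ ≤ 2 * Kg' * (∫ p, dist p.1 p.2 ∂π) ^ α := by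
  haveI hπ : IsProbabilityMeasure π := by
    constructor
    have h := Measure.map_apply (μ := π) (f := (Prod.fst : X × X → X)) measurable_fst
      MeasurableSet.univ
    rw [hfst, Set.preimage_univ] at h
    rw [← h]; exact hP.measure_univ
  set r := ∫ p : X × X, dist p.1 p.2 ∂π with hrdef
  have hr0 : 0 ≤ r := integral_nonneg fun p => dist_nonneg
  have hint1 : Integrable (fun p : X × X => g p.1) π := contInt _ (hgc.comp continuous_fst)
  have hint2 : Integrable (fun p : X × X => g p.2) π := contInt _ (hgc.comp continuous_snd)
  have hP1 : ∫ x, g x ∂P = ∫ p : X × X, g p.1 ∂π := by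
    rw [← hfst, integral_map measurable_fst.aemeasurable hgc.aestronglyMeasurable]
  have hQ1 : ∫ x, g x ∂Q = ∫ p : X × X, g p.2 ∂π := by
    rw [← hsnd, integral_map measurable_snd.aemeasurable hgc.aestronglyMeasurable]
  have hdcont : Continuous fun p : X × X => dist p.1 p.2 := continuous_dist
  have hdαcont : Continuous fun p : X × X => dist p.1 p.2 ^ α :=
    hdcont.rpow_const (fun p => Or.inr hα0.le)
  have hdint : Integrable (fun p : X × X => dist p.1 p.2) π := contInt _ hdcont
  have hdαint : Integrable (fun p : X × X => dist p.1 p.2 ^ α) π := contInt _ hdαcont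
  have key : ‖(∫ x, g x ∂P) - ∫ x, g x ∂Q‖ ≤ Kg' * ∫ p : X × X, dist p.1 p.2 ^ α ∂π := by
    rw [hP1, hQ1, ← integral_sub hint1 hint2]
    refine (norm_integral_le_integral_norm _).trans ?_
    rw [← integral_const_mul]
    refine integral_mono ((hint1.sub hint2).norm) (hdαint.const_mul _) ?_
    intro p
    exact hg p.1 p.2
  have hbound : ∀ δ : ℝ, 0 < δ →
      ∫ p : X × X, dist p.1 p.2 ^ α ∂π ≤ δ ^ α + δ ^ (α - 1) * r := by
    intro δ hδ
    have h1 : ∫ p : X × X, dist p.1 p.2 ^ α ∂π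
        ≤ ∫ p : X × X, (δ ^ α + δ ^ (α - 1) * dist p.1 p.2) ∂π := by
      refine integral_mono hdαint ((integrable_const _).add (hdint.const_mul _)) ?_
      intro p
      exact rpow_delta dist_nonneg hδ hα0 hα1
    rw [integral_add (integrable_const _) (hdint.const_mul _), integral_const,
      integral_const_mul, probReal_univ] at h1
    simpa using h1
  rcases eq_or_lt_of_le hr0 with hr | hr
  · -- r = 0
    rw [← hr, Real.zero_rpow hα0.ne', mul_zero]
    refine le_of_forall_pos_le_add ?_
    intro ε hε
    rcases eq_or_lt_of_le hKg' with hK | hK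
    · have := key.trans (by rw [← hK]; simp : Kg' * ∫ p : X × X, dist p.1 p.2 ^ α ∂π ≤ 0)
      linarith
    · set δ : ℝ := (ε / Kg') ^ α⁻¹ with hδdef
      have hδpos : 0 < δ := Real.rpow_pos_of_pos (div_pos hε hK) _
      have hδα : δ ^ α = ε / Kg' := Real.rpow_inv_rpow (div_pos hε hK).le hα0.ne'
      have := key.trans (mul_le_mul_of_nonneg_left (hbound δ hδpos) hKg')
      rw [← hr] at this
      rw [mul_add] at this
      rw [hδα] at this
      rw [mul_div_cancel₀ _ hK.ne'] at this
      simpa using this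
  · -- r > 0
    have h1 := key.trans (mul_le_mul_of_nonneg_left (hbound r hr) hKg')
    have h2 : r ^ (α - 1) * r = r ^ α := by
      have h4 := Real.rpow_add_one hr.ne' (α - 1)
      rw [sub_add_cancel] at h4
      exact h4.symm
    rw [h2] at h1
    calc ‖(∫ x, g x ∂P) - ∫ x, g x ∂Q‖ ≤ Kg' * (r ^ α + r ^ α) := h1
    _ = 2 * Kg' * r ^ α := by ring

lemma W1_est {g : X → ℂ} (hgc : Continuous g) {α Kg' : ℝ}
    (hα0 : 0 < α) (hα1 : α ≤ 1) (hKg' : 0 ≤ Kg')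
    (hg : ∀ x y, ‖g x - g y‖ ≤ Kg' * dist x y ^ α)
    (P Q : Measure X) (hP : IsProbabilityMeasure P) (hQ : IsProbabilityMeasure Q)
    {D : ℝ} (hD : 0 ≤ D) (hWle : W1 P Q ≤ D) :
    ‖(∫ x, g x ∂P) - ∫ x, g x ∂Q‖ ≤ 2 * Kg' * D ^ α := by
  set S := {r | ∃ π : Measure (X × X), π.map Prod.fst = P ∧ π.map Prod.snd = Q ∧
    r = ∫ p, dist p.1 p.2 ∂π} with hSdef
  have hSne : S.Nonempty := by
    refine ⟨∫ p : X × X, dist p.1 p.2 ∂(P.prod Q), P.prod Q, ?_, ?_, rfl⟩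
    · exact Measure.fst_prod
    · exact Measure.snd_prod
  have hS0 : ∀ s ∈ S, (0:ℝ) ≤ s := by
    rintro s ⟨π, h1, h2, rfl⟩
    exact integral_nonneg fun p => dist_nonneg
  have hkey : ∀ s ∈ S, ‖(∫ x, g x ∂P) - ∫ x, g x ∂Q‖ ≤ 2 * Kg' * s ^ α := by
    rintro s ⟨π, h1, h2, rfl⟩
    exact coupling_bound hgc hα0 hα1 hKg' hg P Q hP hQ π h1 h2
  have hW1S : W1 P Q = sInf S := rfl
  have hεbound : ∀ ε : ℝ, 0 < ε → ‖(∫ x, g x ∂P) - ∫ x, g x ∂Q‖ ≤ 2 * Kg' * (D + ε) ^ α := by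
    intro ε hε
    obtain ⟨s, hsS, hslt⟩ := exists_lt_of_csInf_lt hSne
      (show sInf S < W1 P Q + ε from lt_add_of_pos_right _ hε)
    refine (hkey s hsS).trans ?_
    refine mul_le_mul_of_nonneg_left ?_ (by linarith)
    exact Real.rpow_le_rpow (hS0 s hsS) (hslt.le.trans (by linarith)) hα0.le
  have htend : Filter.Tendsto (fun ε : ℝ => 2 * Kg' * (D + ε) ^ α)
      (nhdsWithin 0 (Set.Ioi 0)) (nhds (2 * Kg' * D ^ α)) := by
    have h1 : ContinuousAt (fun ε : ℝ => D + ε) 0 := by fun_prop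
    have h2 : ContinuousAt (fun t : ℝ => t ^ α) (D + 0) :=
      Real.continuousAt_rpow_const _ _ (Or.inr hα0.le)
    have hc : ContinuousAt (fun ε : ℝ => 2 * Kg' * (D + ε) ^ α) 0 :=
      (continuousAt_const.mul (h2.comp h1))
    have h3 := hc.tendsto.mono_left (nhdsWithin_le_nhds (s := Set.Ioi (0:ℝ)))
    simpa using h3
  exact ge_of_tendsto htend (eventually_nhdsWithin_of_forall fun ε hε' => hεbound ε hε')

lemma holder_cont {g : X → ℂ} {α Kg' : ℝ} (hα0 : 0 < α) (hKg' : 0 ≤ Kg')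
    (hg : ∀ x y, ‖g x - g y‖ ≤ Kg' * dist x y ^ α) : Continuous g := by
  rw [continuous_iff_continuousAt]
  intro x
  rw [ContinuousAt, tendsto_iff_dist_tendsto_zero]
  have hc : Continuous fun y => Kg' * dist y x ^ α :=
    continuous_const.mul ((continuous_id.dist continuous_const).rpow_const fun _ => Or.inr hα0.le)
  have hb : Filter.Tendsto (fun y => Kg' * dist y x ^ α) (nhds x) (nhds 0) := by
    have h1 := hc.continuousAt (x := x)
    have h2 : Kg' * dist x x ^ α = 0 := by
      simp [Real.zero_rpow hα0.ne']
    rw [ContinuousAt, h2] at h1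
    exact h1
  exact squeeze_zero (fun y => dist_nonneg) (fun y => by simpa [dist_eq_norm] using hg y x) hb


end Aux

/-- Under the uniform geometric Wasserstein convergence hypothesis, for every
Hölder continuous `g` with `E_{ν_inv}(g) = 0`, the Poisson equation `(Id − Π) g̃ = g` has a
continuous solution, unique up to an additive constant among continuous solutions. -/
theorem poisson_equation_continuous_solution {X : Type*} [MetricSpace X] [CompactSpace X]
    [MeasurableSpace X] [BorelSpace X]
    (K : X → Measure X) (hKprob : ∀ x, IsProbabilityMeasure (K x)) (hKmeas : Measurable K)
    (hFeller : ∀ f : X → ℂ, Continuous f → Continuous fun x => ∫ y, f y ∂(K x))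
    (νinv : Measure X) (hνinv : IsProbabilityMeasure νinv) (hinv : νinv.bind K = νinv)
    (m : ℕ) (hm : 1 ≤ m) (C lam : ℝ) (hC : 0 < C) (hlam0 : 0 < lam) (hlam1 : lam < 1)
    (hW : ∀ ν : Measure X, IsProbabilityMeasure ν → ∀ n : ℕ,
      W1 (((m : ENNReal))⁻¹ • ∑ r ∈ Finset.range m, iterKer K (m * n + r) ν) νinv
        ≤ C * lam ^ n)
    (hconst : ∀ f : X → ℂ, Continuous f → (∀ x, ∫ y, f y ∂(K x) = f x) → ∀ x y, f x = f y)
    (g : X → ℂ) (α Kg : ℝ) (hα0 : 0 < α) (hα1 : α ≤ 1)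
    (hg : ∀ x y, ‖g x - g y‖ ≤ Kg * dist x y ^ α)
    (hgcentered : ∫ x, g x ∂νinv = 0) :
    (∃ gt : X → ℂ, Continuous gt ∧ ∀ x, gt x - ∫ y, gt y ∂(K x) = g x) ∧
    (∀ gt₁ gt₂ : X → ℂ, Continuous gt₁ → Continuous gt₂ →
      (∀ x, gt₁ x - ∫ y, gt₁ y ∂(K x) = g x) → (∀ x, gt₂ x - ∫ y, gt₂ y ∂(K x) = g x) →
      ∃ c : ℂ, ∀ x, gt₁ x = gt₂ x + c) := by
  haveI := hνinv
  have hm0 : (m:ℝ) ≠ 0 := by positivity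
  -- Hölder data
  set Kg' : ℝ := max Kg 0 with hKg'def
  have hKg' : 0 ≤ Kg' := le_max_right _ _
  have hg' : ∀ x y, ‖g x - g y‖ ≤ Kg' * dist x y ^ α := fun x y =>
    (hg x y).trans (mul_le_mul_of_nonneg_right (le_max_left _ _)
      (Real.rpow_nonneg dist_nonneg _))
  have hgc : Continuous g := holder_cont hα0 hKg' hg'
  set B : ℕ → ℝ := fun n => 2 * Kg' * (C * lam ^ n) ^ α with hBdef
  have hB0 : ∀ n, 0 ≤ B n := fun n => by positivity
  have hBtend : Filter.Tendsto B Filter.atTop (nhds 0) := by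
    have h1 : ∀ n, B n = (2 * Kg' * C ^ α) * (lam ^ α) ^ n := by
      intro n
      have h2 : (lam ^ n : ℝ) ^ α = (lam ^ α) ^ n := by
        rw [← Real.rpow_natCast lam n, ← Real.rpow_mul hlam0.le,
          ← Real.rpow_natCast (lam ^ α) n, ← Real.rpow_mul hlam0.le, mul_comm]
      rw [hBdef]
      simp only [Real.mul_rpow hC.le (pow_nonneg hlam0.le n), h2]
      ring
    simp only [funext h1]
    have h3 : Filter.Tendsto (fun n => (lam ^ α) ^ n) Filter.atTop (nhds 0) :=
      tendsto_pow_atTop_nhds_zero_of_lt_one (Real.rpow_nonneg hlam0.le α)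
        (Real.rpow_lt_one hlam0.le hlam1 hα0)
    simpa using h3.const_mul (2 * Kg' * C ^ α)
  -- the averaged measures
  set μν : Measure X → ℕ → Measure X := fun ν n =>
    ((m : ENNReal))⁻¹ • ∑ r ∈ Finset.range m, iterKer K (m * n + r) ν with hμνdef
  have hμprob : ∀ ν, IsProbabilityMeasure ν → ∀ n, IsProbabilityMeasure (μν ν n) := by
    intro ν hν n
    constructor
    rw [hμνdef]
    simp only [Measure.smul_apply, Measure.coe_finset_sum, Finset.sum_apply, smul_eq_mul]
    have h1 : ∀ r ∈ Finset.range m, (iterKer K (m * n + r) ν) Set.univ = 1 :=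
      fun r _ => (iterKerProb K hKprob hKmeas ν hν (m * n + r)).measure_univ
    rw [Finset.sum_congr rfl h1]
    simp only [Finset.sum_const, Finset.card_range, nsmul_eq_mul, mul_one]
    exact ENNReal.inv_mul_cancel (by exact_mod_cast (by omega : m ≠ 0)) (by simp)
  have hμint : ∀ ν, IsProbabilityMeasure ν → ∀ n,
      ∫ x, g x ∂(μν ν n) = (m:ℝ)⁻¹ • ∑ r ∈ Finset.range m, ∫ x, g x ∂(iterKer K (m*n+r) ν) := by
    intro ν hν n
    rw [hμνdef]
    have hint : ∀ r ∈ Finset.range m, Integrable g (iterKer K (m*n+r) ν) := by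
      intro r _
      haveI := iterKerProb K hKprob hKmeas ν hν (m*n+r)
      exact contInt _ hgc
    rw [integral_smul_measure, integral_finset_sum_measure hint]
    congr 1
    simp [ENNReal.toReal_inv]
  have hL1 : ∀ ν, IsProbabilityMeasure ν → ∀ n,
      ‖(m:ℝ)⁻¹ • ∑ r ∈ Finset.range m, ∫ x, g x ∂(iterKer K (m*n+r) ν)‖ ≤ B n := by
    intro ν hν n
    have h1 := W1_est hgc hα0 hα1 hKg' hg' (μν ν n) νinv (hμprob ν hν n) hνinv
      (D := C * lam ^ n) (by positivity) (hW ν hν n)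
    rw [hgcentered, sub_zero, hμint ν hν n] at h1
    exact h1
  -- pointwise formula for iterates
  have hFcont : ∀ k, Continuous ((Pop K)^[k] g) := PopIterCont K hFeller hgc
  have hPt : ∀ k x, (Pop K)^[k] g x = ∫ y, g y ∂(iterKer K k (Measure.dirac x)) := by
    intro k x
    rw [integral_iterKer K hKprob hKmeas hFeller k g hgc (Measure.dirac x) Measure.dirac.isProbabilityMeasure,
      integral_dirac' _ _ (hFcont k).stronglyMeasurable]
  -- shifted Cesàro bound
  have hb2 : ∀ (r n : ℕ) (x : X),
      ‖(m:ℝ)⁻¹ • ∑ j ∈ Finset.range m, (Pop K)^[m*n+j+r] g x‖ ≤ B n := by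
    intro r n x
    have hδ : IsProbabilityMeasure (iterKer K r (Measure.dirac x)) :=
      iterKerProb K hKprob hKmeas _ Measure.dirac.isProbabilityMeasure r
    have h1 : ∀ j, (Pop K)^[m*n+j+r] g x
        = ∫ y, g y ∂(iterKer K (m*n+j) (iterKer K r (Measure.dirac x))) := by
      intro j
      rw [hPt]
      congr 1
      rw [← iterKer_add K hKmeas r (m*n+j)]
      congr 1
      omega
    simp only [h1]
    exact hL1 _ hδ n
  have hb1 : ∀ (n : ℕ) (x : X),
      ‖(m:ℝ)⁻¹ • ∑ r ∈ Finset.range m, (Pop K)^[m*n+r] g x‖ ≤ B n := by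
    intro n x
    have := hb2 0 n x
    simpa using this
  -- the approximating sequence
  set A : ℕ → C(X, ℂ) := fun n =>
    ⟨fun x => (m:ℝ)⁻¹ • ∑ r ∈ Finset.range m, ∑ k ∈ Finset.range (m*n+r), (Pop K)^[k] g x,
     (Continuous.const_smul (continuous_finset_sum _ fun r _ =>
        continuous_finset_sum _ fun k _ => hFcont k) ((m:ℝ)⁻¹))⟩ with hAdef
  have hAval : ∀ n x, A n x
      = (m:ℝ)⁻¹ • ∑ r ∈ Finset.range m, ∑ k ∈ Finset.range (m*n+r), (Pop K)^[k] g x := by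
    intro n x; rfl
  have hAdiff : ∀ n x, A (n+1) x - A n x
      = ∑ r ∈ Finset.range m, ((m:ℝ)⁻¹ • ∑ j ∈ Finset.range m, (Pop K)^[m*n+j+r] g x) := by
    intro n x
    rw [hAval, hAval, ← smul_sub, ← Finset.sum_sub_distrib, Finset.smul_sum]
    refine Finset.sum_congr rfl ?_
    intro r _
    congr 1
    have h1 : ∑ k ∈ Finset.range (m*(n+1)+r), (Pop K)^[k] g x
        - ∑ k ∈ Finset.range (m*n+r), (Pop K)^[k] g x
        = ∑ k ∈ Finset.Ico (m*n+r) (m*(n+1)+r), (Pop K)^[k] g x := by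
      rw [Finset.sum_Ico_eq_sub _ (by rw [Nat.mul_succ]; omega : m*n+r ≤ m*(n+1)+r)]
    rw [h1, Finset.sum_Ico_eq_sum_range]
    have h2 : m*(n+1)+r - (m*n+r) = m := by rw [Nat.mul_succ]; omega
    rw [h2]
    refine Finset.sum_congr rfl ?_
    intro j _
    have h3 : m*n+r+j = m*n+j+r := by omega
    rw [h3]
  have hAcauchy : CauchySeq A := by
    refine cauchySeq_of_le_geometric (lam ^ α) ((m:ℝ) * (2 * Kg' * C ^ α))
      (Real.rpow_lt_one hlam0.le hlam1 hα0) ?_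
    intro n
    have hBn : B n = 2 * Kg' * C ^ α * (lam ^ α) ^ n := by
      have h2 : (lam ^ n : ℝ) ^ α = (lam ^ α) ^ n := by
        rw [← Real.rpow_natCast lam n, ← Real.rpow_mul hlam0.le,
          ← Real.rpow_natCast (lam ^ α) n, ← Real.rpow_mul hlam0.le, mul_comm]
      rw [hBdef]
      simp only [Real.mul_rpow hC.le (pow_nonneg hlam0.le n), h2]
      ring
    rw [ContinuousMap.dist_le (by positivity)]
    intro x
    rw [dist_eq_norm, norm_sub_rev, hAdiff n x]
    calc ‖∑ r ∈ Finset.range m, ((m:ℝ)⁻¹ • ∑ j ∈ Finset.range m, (Pop K)^[m*n+j+r] g x)‖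
        ≤ ∑ r ∈ Finset.range m, ‖(m:ℝ)⁻¹ • ∑ j ∈ Finset.range m, (Pop K)^[m*n+j+r] g x‖ :=
          norm_sum_le _ _
      _ ≤ ∑ r ∈ Finset.range m, B n := Finset.sum_le_sum fun r _ => hb2 r n x
      _ = (m:ℝ) * B n := by simp [mul_comm]
      _ = (m:ℝ) * (2 * Kg' * C ^ α) * (lam ^ α) ^ n := by rw [hBn]; ring
  obtain ⟨gt, hgt⟩ := cauchySeq_tendsto_of_complete hAcauchy
  have htpt : ∀ x, Filter.Tendsto (fun n => A n x) Filter.atTop (nhds (gt x)) := by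
    intro x
    exact ((continuous_eval_const x).tendsto gt).comp hgt
  have hIdent : ∀ n x, A n x - ∫ y, A n y ∂(K x)
      = g x - (m:ℝ)⁻¹ • ∑ r ∈ Finset.range m, (Pop K)^[m*n+r] g x := by
    intro n x
    haveI := hKprob x
    have hPA : ∫ y, A n y ∂(K x)
        = (m:ℝ)⁻¹ • ∑ r ∈ Finset.range m, ∑ k ∈ Finset.range (m*n+r),
            (Pop K)^[k+1] g x := by
      have e1 : ∫ y, A n y ∂(K x)
          = (m:ℝ)⁻¹ • ∫ y, (∑ r ∈ Finset.range m, ∑ k ∈ Finset.range (m*n+r),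
              (Pop K)^[k] g y) ∂(K x) := by
        simp only [hAval]
        rw [integral_smul]
      rw [e1, integral_finset_sum _ (fun r _ =>
        contInt _ (continuous_finset_sum _ fun k _ => hFcont k))]
      congr 1
      refine Finset.sum_congr rfl fun r _ => ?_
      rw [integral_finset_sum _ (fun k _ => contInt _ (hFcont k))]
      refine Finset.sum_congr rfl fun k _ => ?_
      rw [Function.iterate_succ_apply']
      rfl
    rw [hPA, hAval, ← smul_sub, ← Finset.sum_sub_distrib]
    have e2 : ∀ r ∈ Finset.range m, (∑ k ∈ Finset.range (m*n+r), (Pop K)^[k] g x)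
        - ∑ k ∈ Finset.range (m*n+r), (Pop K)^[k+1] g x
        = g x - (Pop K)^[m*n+r] g x := by
      intro r _
      rw [← Finset.sum_sub_distrib, Finset.sum_range_sub' (fun k => (Pop K)^[k] g x)]
      rfl
    rw [Finset.sum_congr rfl e2, Finset.sum_sub_distrib, smul_sub]
    congr 1
    rw [Finset.sum_const, Finset.card_range]
    rw [← Nat.cast_smul_eq_nsmul ℝ, smul_smul, inv_mul_cancel₀ hm0, one_smul]
  refine ⟨⟨⇑gt, gt.continuous, ?_⟩, ?_⟩
  · intro x
    haveI := hKprob x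
    have hlim1 : Filter.Tendsto (fun n => A n x - ∫ y, A n y ∂(K x)) Filter.atTop
        (nhds (gt x - ∫ y, gt y ∂(K x))) := by
      refine (htpt x).sub ?_
      rw [tendsto_iff_dist_tendsto_zero]
      have hbnd : ∀ n, dist (∫ y, A n y ∂(K x)) (∫ y, gt y ∂(K x)) ≤ dist (A n) gt := by
        intro n
        rw [dist_eq_norm, ← integral_sub (contInt _ (A n).continuous)
          (contInt _ gt.continuous)]
        have h6 := norm_integral_le_of_norm_le_const (μ := K x)
          (f := fun y => A n y - gt y) (C := dist (A n) gt)
          (Filter.Eventually.of_forall fun y => by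
            rw [← dist_eq_norm]; exact ContinuousMap.dist_apply_le_dist y)
        simpa [measure_univ] using h6
      exact squeeze_zero (fun n => dist_nonneg) hbnd
        (tendsto_iff_dist_tendsto_zero.mp hgt)
    have hlim2 : Filter.Tendsto (fun n => A n x - ∫ y, A n y ∂(K x)) Filter.atTop
        (nhds (g x)) := by
      simp only [hIdent]
      have herr : Filter.Tendsto
          (fun n => (m:ℝ)⁻¹ • ∑ r ∈ Finset.range m, (Pop K)^[m*n+r] g x)
          Filter.atTop (nhds 0) :=
        squeeze_zero_norm (fun n => hb1 n x) hBtend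
      simpa using (tendsto_const_nhds (x := g x) (f := Filter.atTop (α := ℕ))).sub herr
    exact tendsto_nhds_unique hlim1 hlim2
  · intro gt₁ gt₂ h1c h2c h1 h2
    have hharm : ∀ x, ∫ y, (gt₁ y - gt₂ y) ∂(K x) = gt₁ x - gt₂ x := by
      intro x
      haveI := hKprob x
      rw [integral_sub (contInt _ h1c) (contInt _ h2c)]
      linear_combination (h2 x) - (h1 x)
    have hcc := hconst (fun y => gt₁ y - gt₂ y) (h1c.sub h2c) hharm
    rcases isEmpty_or_nonempty X with hX | hX
    · exact ⟨0, fun x => (IsEmpty.false x).elim⟩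
    · obtain ⟨x₀⟩ := hX
      refine ⟨gt₁ x₀ - gt₂ x₀, fun x => ?_⟩
      linear_combination hcc x x₀
end

section
/- For a Markov chain with conditional increment variance E[(g̃(x̂_k) − Πg̃(x̂_{k−1}))² | J_{k−1}] = h(x̂_{k−1}) and Cesàro convergence νΠ^k-averages to ν_inv uniformly in ν (geometric in Wasserstein, with h Lipschitz-approximable), one has the uniform-in-shift convergence: lim_{n→∞} sup_{x̂} sup_{j ≥ 0} |(1/n) E_x̂[∑_{i=1}^n h(x̂_{j+i−1})] − E_{ν_inv}(h)| = 0. -/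
open MeasureTheory
open scoped NNReal

/-- The subalgebra of Lipschitz functions in `C(X, ℝ)` for `X` a compact metric space. -/
noncomputable def lipSubalgebra (X : Type*) [MetricSpace X] [CompactSpace X] :
    Subalgebra ℝ C(X, ℝ) where
  carrier := {f : C(X, ℝ) | ∃ L : ℝ≥0, LipschitzWith L f}
  mul_mem' := by
    rintro f g ⟨Lf, hLf⟩ ⟨Lg, hLg⟩
    obtain ⟨Cf, hCf⟩ := IsCompact.exists_bound_of_continuousOn isCompact_univ
      (map_continuous f).continuousOn
    obtain ⟨Cg, hCg⟩ := IsCompact.exists_bound_of_continuousOn isCompact_univ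
      (map_continuous g).continuousOn
    refine ⟨(Cf * Lg + Cg * Lf).toNNReal, LipschitzWith.of_dist_le_mul fun x y => ?_⟩
    have h1 : dist (f x * g x) (f y * g y) ≤ |f x| * dist (g x) (g y)
        + |g y| * dist (f x) (f y) := by
      have : f x * g x - f y * g y = f x * (g x - g y) + g y * (f x - f y) := by ring
      simp only [Real.dist_eq, this]
      calc |f x * (g x - g y) + g y * (f x - f y)|
          ≤ |f x * (g x - g y)| + |g y * (f x - f y)| := abs_add_le _ _
        _ = |f x| * |g x - g y| + |g y| * |f x - f y| := by rw [abs_mul, abs_mul]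
    have h2 : |f x| * dist (g x) (g y) ≤ Cf * (Lg * dist x y) := by
      have := hCg y (Set.mem_univ y)
      exact mul_le_mul (hCf x (Set.mem_univ x)) (hLg.dist_le_mul x y)
        dist_nonneg ((abs_nonneg _).trans (hCf x (Set.mem_univ x)))
    have h3 : |g y| * dist (f x) (f y) ≤ Cg * (Lf * dist x y) := by
      exact mul_le_mul (hCg y (Set.mem_univ y)) (hLf.dist_le_mul x y)
        dist_nonneg ((abs_nonneg _).trans (hCg y (Set.mem_univ y)))
    have h4 : Cf * (Lg * dist x y) + Cg * (Lf * dist x y)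
        = (Cf * Lg + Cg * Lf) * dist x y := by ring
    have h5 : (Cf * Lg + Cg * Lf) * dist x y
        ≤ ((Cf * Lg + Cg * Lf).toNNReal : ℝ) * dist x y := by
      apply mul_le_mul_of_nonneg_right _ dist_nonneg
      rw [Real.coe_toNNReal']
      exact le_max_left _ _
    simp only [ContinuousMap.coe_mul, Pi.mul_apply]
    linarith
  add_mem' := by
    rintro f g ⟨Lf, hLf⟩ ⟨Lg, hLg⟩
    exact ⟨Lf + Lg, hLf.add hLg⟩
  algebraMap_mem' := fun r =>
    ⟨0, by
      have : ⇑(algebraMap ℝ C(X, ℝ) r) = fun _ : X => r := rfl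
      rw [this]; exact LipschitzWith.const r⟩

lemma lipSubalgebra_separatesPoints (X : Type*) [MetricSpace X] [CompactSpace X] :
    (lipSubalgebra X).SeparatesPoints := by
  intro x y hxy
  refine ⟨_, ⟨⟨fun z => dist x z, (continuous_const.dist continuous_id)⟩,
    (⟨1, LipschitzWith.dist_right x⟩ : ∃ L : ℝ≥0, LipschitzWith L fun z => dist x z), rfl⟩, ?_⟩
  simp only [ContinuousMap.coe_mk]
  rw [dist_self]
  exact fun hc => hxy (dist_eq_zero.mp hc.symm)

lemma integral_abs_sub_le {X : Type*} [MeasurableSpace X] (μ : Measure X)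
    [IsProbabilityMeasure μ] {f g : X → ℝ} {δ : ℝ} (hδ : ∀ y, |f y - g y| ≤ δ)
    (hf : Integrable f μ) (hg : Integrable g μ) :
    |∫ y, f y ∂μ - ∫ y, g y ∂μ| ≤ δ := by
  rw [← integral_sub hf hg]
  have := norm_integral_le_of_norm_le_const (μ := μ) (f := fun y => f y - g y) (C := δ)
    (Filter.Eventually.of_forall fun y => by simpa using hδ y)
  simpa using this

/-- If the Cesàro averages of `νΠ^k` converge to `ν_inv` at rate `C/n`
uniformly in `ν` for every Lipschitz test function, then for every continuous `h` the
uniform-in-shift convergence holds: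
`lim_n sup_{x̂} sup_{j≥0} |(1/n) E_x̂[∑_{i=1}^n h(x̂_{j+i−1})] − E_{ν_inv}(h)| = 0`. -/
theorem uniform_shift_cesaro_convergence {X : Type*} [MetricSpace X] [CompactSpace X]
    [MeasurableSpace X] [BorelSpace X]
    (K : X → Measure X) (hKprob : ∀ x, IsProbabilityMeasure (K x)) (hKmeas : Measurable K)
    (hFeller : ∀ f : X → ℝ, Continuous f → Continuous fun x => ∫ y, f y ∂(K x))
    (νinv : Measure X) [IsProbabilityMeasure νinv]
    (hLip : ∀ f : X → ℝ, (∃ L : NNReal, LipschitzWith L f) →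
      ∃ C > (0 : ℝ), ∀ ν : Measure X, IsProbabilityMeasure ν → ∀ n : ℕ, 1 ≤ n →
        |(n : ℝ)⁻¹ * (∑ i ∈ Finset.range n, ∫ y, f y ∂(iterKer K i ν)) - ∫ y, f y ∂νinv|
          ≤ C / n)
    (h : X → ℝ) (hh : Continuous h) :
    Filter.Tendsto
      (fun n : ℕ => ⨆ x : X, ⨆ j : ℕ,
        |(n : ℝ)⁻¹ * (∑ i ∈ Finset.range n, ∫ y, h y ∂(iterKer K (j + i) (Measure.dirac x)))
          - ∫ y, h y ∂νinv|)
      Filter.atTop (nhds 0) := by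
  -- iterated kernel preserves probability measures
  have hprob : ∀ (n : ℕ) (ν : Measure X), IsProbabilityMeasure ν →
      IsProbabilityMeasure (iterKer K n ν) := by
    intro n
    induction n with
    | zero => exact fun ν hν => hν
    | succ n ih =>
      intro ν hν
      haveI := ih ν hν
      constructor
      show ((iterKer K n ν).bind K) Set.univ = 1
      rw [Measure.bind_apply MeasurableSet.univ hKmeas.aemeasurable]
      simp [fun x => (hKprob x).measure_univ]
  -- shift property
  have hshift : ∀ (i j : ℕ) (ν : Measure X),
      iterKer K i (iterKer K j ν) = iterKer K (j + i) ν := by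
    intro i
    induction i with
    | zero => intro j ν; rfl
    | succ i ih =>
      intro j ν
      rw [Nat.add_succ]
      show (iterKer K i (iterKer K j ν)).bind K = (iterKer K (j + i) ν).bind K
      rw [ih]
  -- integrability of continuous functions
  have hint : ∀ (μ : Measure X), IsProbabilityMeasure μ → ∀ g : X → ℝ, Continuous g →
      Integrable g μ := fun μ hμ g hg =>
    hg.integrable_of_hasCompactSupport (HasCompactSupport.of_compactSpace g)
  rw [Metric.tendsto_atTop]
  intro ε hε
  -- approximate h by a Lipschitz function within ε/4
  obtain ⟨f, hf⟩ := ContinuousMap.exists_mem_subalgebra_near_continuous_of_separatesPoints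
    (lipSubalgebra X) (lipSubalgebra_separatesPoints X) h hh (ε / 4) (by linarith)
  obtain ⟨L, hL⟩ := f.2
  have hfc : Continuous (f : X → ℝ) := map_continuous (f : C(X, ℝ))
  have hfh : ∀ y, |(f : X → ℝ) y - h y| ≤ ε / 4 := fun y => by
    have := hf y
    rw [Real.norm_eq_abs] at this
    linarith
  obtain ⟨C, hC, hCbound⟩ := hLip (f : X → ℝ) ⟨L, hL⟩
  -- choose N with C/n < ε/4 for n ≥ N
  obtain ⟨N, hN⟩ := Filter.eventually_atTop.mp
    ((tendsto_const_div_atTop_nhds_zero_nat C).eventually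
      (eventually_lt_nhds (show (0:ℝ) < ε / 4 by linarith)) |>.and
      (Filter.eventually_ge_atTop 1))
  refine ⟨N, fun n hn => ?_⟩
  obtain ⟨hCn, hn1⟩ := hN n hn
  have hn0 : (n : ℝ) ≠ 0 := Nat.cast_ne_zero.mpr (by omega)
  have hnpos : (0 : ℝ) < n := by positivity
  -- pointwise bound over x, j
  have key : ∀ (x : X) (j : ℕ),
      |(n : ℝ)⁻¹ * (∑ i ∈ Finset.range n, ∫ y, h y ∂(iterKer K (j + i) (Measure.dirac x)))
        - ∫ y, h y ∂νinv| ≤ C / n + ε / 4 + ε / 4 := by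
    intro x j
    set ν : Measure X := iterKer K j (Measure.dirac x) with hν
    haveI hνp : IsProbabilityMeasure ν := hprob j _ (by infer_instance)
    have hrw : ∀ g : X → ℝ, (∑ i ∈ Finset.range n, ∫ y, g y ∂(iterKer K (j + i) (Measure.dirac x)))
        = ∑ i ∈ Finset.range n, ∫ y, g y ∂(iterKer K i ν) :=
      fun g => Finset.sum_congr rfl fun i _ => by rw [hν, hshift]
    rw [hrw h]
    have hterm : ∀ i ∈ Finset.range n,
        |(∫ y, h y ∂(iterKer K i ν)) - ∫ y, (f : X → ℝ) y ∂(iterKer K i ν)| ≤ ε / 4 := by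
      intro i _
      haveI := hprob i ν hνp
      exact integral_abs_sub_le _ (fun y => by have := hfh y; rw [abs_sub_comm]; linarith)
        (hint _ (hprob i ν hνp) h hh) (hint _ (hprob i ν hνp) _ hfc)
    have hsum : |(∑ i ∈ Finset.range n, ∫ y, h y ∂(iterKer K i ν))
        - ∑ i ∈ Finset.range n, ∫ y, (f : X → ℝ) y ∂(iterKer K i ν)| ≤ n * (ε / 4) := by
      rw [← Finset.sum_sub_distrib]
      calc |∑ i ∈ Finset.range n, ((∫ y, h y ∂(iterKer K i ν))
              - ∫ y, (f : X → ℝ) y ∂(iterKer K i ν))|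
          ≤ ∑ i ∈ Finset.range n, |(∫ y, h y ∂(iterKer K i ν))
              - ∫ y, (f : X → ℝ) y ∂(iterKer K i ν)| := Finset.abs_sum_le_sum_abs _ _
        _ ≤ ∑ _i ∈ Finset.range n, ε / 4 := Finset.sum_le_sum hterm
        _ = n * (ε / 4) := by rw [Finset.sum_const, Finset.card_range]; ring
    have hA := hCbound ν hνp n hn1
    have hB : |(∫ y, (f : X → ℝ) y ∂νinv) - ∫ y, h y ∂νinv| ≤ ε / 4 :=
      integral_abs_sub_le _ hfh (hint _ inferInstance _ hfc) (hint _ inferInstance h hh)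
    have expand :
        (n : ℝ)⁻¹ * (∑ i ∈ Finset.range n, ∫ y, h y ∂(iterKer K i ν)) - ∫ y, h y ∂νinv
        = ((n : ℝ)⁻¹ * (∑ i ∈ Finset.range n, ∫ y, (f : X → ℝ) y ∂(iterKer K i ν))
            - ∫ y, (f : X → ℝ) y ∂νinv)
          + (n : ℝ)⁻¹ * ((∑ i ∈ Finset.range n, ∫ y, h y ∂(iterKer K i ν))
              - ∑ i ∈ Finset.range n, ∫ y, (f : X → ℝ) y ∂(iterKer K i ν))
          + ((∫ y, (f : X → ℝ) y ∂νinv) - ∫ y, h y ∂νinv) := by ring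
    rw [expand]
    have habs2 : |(n : ℝ)⁻¹ * ((∑ i ∈ Finset.range n, ∫ y, h y ∂(iterKer K i ν))
        - ∑ i ∈ Finset.range n, ∫ y, (f : X → ℝ) y ∂(iterKer K i ν))| ≤ ε / 4 := by
      rw [abs_mul, abs_of_nonneg (by positivity : (0:ℝ) ≤ (n : ℝ)⁻¹)]
      calc (n : ℝ)⁻¹ * |(∑ i ∈ Finset.range n, ∫ y, h y ∂(iterKer K i ν))
              - ∑ i ∈ Finset.range n, ∫ y, (f : X → ℝ) y ∂(iterKer K i ν)|
          ≤ (n : ℝ)⁻¹ * (n * (ε / 4)) := by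
            apply mul_le_mul_of_nonneg_left hsum (by positivity)
        _ = ε / 4 := by field_simp
    calc |_ + _ + _| ≤ |_ + _| + |(∫ y, (f : X → ℝ) y ∂νinv) - ∫ y, h y ∂νinv| := abs_add_le _ _
      _ ≤ (|(n : ℝ)⁻¹ * (∑ i ∈ Finset.range n, ∫ y, (f : X → ℝ) y ∂(iterKer K i ν))
            - ∫ y, (f : X → ℝ) y ∂νinv|
          + |(n : ℝ)⁻¹ * ((∑ i ∈ Finset.range n, ∫ y, h y ∂(iterKer K i ν))
              - ∑ i ∈ Finset.range n, ∫ y, (f : X → ℝ) y ∂(iterKer K i ν))|)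
          + |(∫ y, (f : X → ℝ) y ∂νinv) - ∫ y, h y ∂νinv| := by
            gcongr
            exact abs_add_le _ _
      _ ≤ C / n + ε / 4 + ε / 4 := by
            have := hA
            gcongr
  -- assemble
  have hsup_le : (⨆ x : X, ⨆ j : ℕ,
      |(n : ℝ)⁻¹ * (∑ i ∈ Finset.range n, ∫ y, h y ∂(iterKer K (j + i) (Measure.dirac x)))
        - ∫ y, h y ∂νinv|) ≤ C / n + ε / 4 + ε / 4 := by
    have hnn : (0:ℝ) ≤ C / n + ε / 4 + ε / 4 := by
      have : (0:ℝ) ≤ C / n := by positivity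
      linarith
    exact Real.iSup_le (fun x => Real.iSup_le (fun j => key x j) hnn) hnn
  have hsup_nonneg : (0:ℝ) ≤ ⨆ x : X, ⨆ j : ℕ,
      |(n : ℝ)⁻¹ * (∑ i ∈ Finset.range n, ∫ y, h y ∂(iterKer K (j + i) (Measure.dirac x)))
        - ∫ y, h y ∂νinv| :=
    Real.iSup_nonneg fun x => Real.iSup_nonneg fun j => abs_nonneg _
  rw [Real.dist_eq, sub_zero, abs_of_nonneg hsup_nonneg]
  calc (⨆ x : X, ⨆ j : ℕ, _) ≤ C / n + ε / 4 + ε / 4 := hsup_le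
    _ < ε / 4 + ε / 4 + ε / 4 := by linarith
    _ < ε := by linarith
end

section
/- In the Keep-Switch model, for g = 1_{{ê_a, ê_b}} one has E_{ν_inv}(g) = 1, yet for every x̂ ∈ P(ℂ²) \ {ê_a, ê_b} and every n, S_n(g) = ∑_{k=0}^{n−1} g(x̂_k) = 0 P_x̂-almost surely; hence the law of large numbers fails for this L¹(ν_inv) function. -/
open MeasureTheory

noncomputable instance projTop :
    TopologicalSpace (Projectivization ℂ (EuclideanSpace ℂ (Fin 2))) :=
  instTopologicalSpaceQuotient

noncomputable instance projMS : MeasurableSpace (Projectivization ℂ (EuclideanSpace ℂ (Fin 2))) :=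
  borel _

instance projBorel : BorelSpace (Projectivization ℂ (EuclideanSpace ℂ (Fin 2))) :=
  ⟨rfl⟩

/-- Keep operator `A₁ = diag(√p, √q)`, `q = 1 − p`. -/
noncomputable def A1 (p : ℝ) : Matrix (Fin 2) (Fin 2) ℂ :=
  !![(Real.sqrt p : ℂ), 0; 0, (Real.sqrt (1 - p) : ℂ)]

/-- Switch operator `A₂ = antidiag(√p, √q)`, `q = 1 − p`. -/
noncomputable def A2 (p : ℝ) : Matrix (Fin 2) (Fin 2) ℂ :=
  !![0, (Real.sqrt p : ℂ); (Real.sqrt (1 - p) : ℂ), 0]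

noncomputable def ea : EuclideanSpace ℂ (Fin 2) := EuclideanSpace.single 0 1
noncomputable def eb : EuclideanSpace ℂ (Fin 2) := EuclideanSpace.single 1 1

lemma ea_ne : ea ≠ 0 := by
  intro h
  have := congrArg (fun v => v 0) h
  simp [ea, EuclideanSpace.single_apply] at this

lemma eb_ne : eb ≠ 0 := by
  intro h
  have := congrArg (fun v => v 1) h
  simp [eb, EuclideanSpace.single_apply] at this

/-- `ê_a`, the projective class of the first standard basis vector. -/
noncomputable def eahat : Projectivization ℂ (EuclideanSpace ℂ (Fin 2)) :=
  Projectivization.mk ℂ ea ea_ne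

/-- `ê_b`, the projective class of the second standard basis vector. -/
noncomputable def ebhat : Projectivization ℂ (EuclideanSpace ℂ (Fin 2)) :=
  Projectivization.mk ℂ eb eb_ne

/-- A unit-norm representative of a point of `P(ℂ²)`. -/
noncomputable def unitRep (x : Projectivization ℂ (EuclideanSpace ℂ (Fin 2))) :
    EuclideanSpace ℂ (Fin 2) := ‖x.rep‖⁻¹ • x.rep

/-- The projective action `A · x̂` (extended arbitrarily when `A x = 0`). -/
noncomputable def mact (A : Matrix (Fin 2) (Fin 2) ℂ)
    (x : Projectivization ℂ (EuclideanSpace ℂ (Fin 2))) :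
    Projectivization ℂ (EuclideanSpace ℂ (Fin 2)) :=
  if h : (WithLp.toLp 2 (A.mulVec (unitRep x)) : EuclideanSpace ℂ (Fin 2)) ≠ 0 then
    Projectivization.mk ℂ (WithLp.toLp 2 (A.mulVec (unitRep x))) h else x

/-- The Keep-Switch quantum trajectory kernel:
`Π(x̂, ·) = ‖A₁x‖² δ_{A₁·x̂} + ‖A₂x‖² δ_{A₂·x̂}`. -/
noncomputable def ksKernel (p : ℝ) (x : Projectivization ℂ (EuclideanSpace ℂ (Fin 2))) :
    Measure (Projectivization ℂ (EuclideanSpace ℂ (Fin 2))) :=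
  ENNReal.ofReal (‖((A1 p).mulVec (unitRep x) : Fin 2 → ℂ)‖ ^ 2) •
      Measure.dirac (mact (A1 p) x)
    + ENNReal.ofReal (‖((A2 p).mulVec (unitRep x) : Fin 2 → ℂ)‖ ^ 2) •
      Measure.dirac (mact (A2 p) x)

section Aux

local notation "E'" => EuclideanSpace ℂ (Fin 2)
local notation "PE" => Projectivization ℂ (EuclideanSpace ℂ (Fin 2))

lemma mk_eq_eahat_iff (v : E') (hv : v ≠ 0) :
    Projectivization.mk ℂ v hv = eahat ↔ v 1 = 0 := by
  rw [eahat, Projectivization.mk_eq_mk_iff]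
  constructor
  · rintro ⟨a, ha⟩
    rw [← ha]
    show a • ea 1 = 0
    simp [ea, EuclideanSpace.single_apply]
  · intro h1
    have h0 : v 0 ≠ 0 := by
      intro h0
      apply hv
      ext i
      fin_cases i <;> simp_all
    refine ⟨Units.mk0 (v 0) h0, ?_⟩
    ext i
    fin_cases i <;>
      simp [ea, EuclideanSpace.single_apply, Units.smul_def, h1]

lemma mk_eq_ebhat_iff (v : E') (hv : v ≠ 0) :
    Projectivization.mk ℂ v hv = ebhat ↔ v 0 = 0 := by
  rw [ebhat, Projectivization.mk_eq_mk_iff]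
  constructor
  · rintro ⟨a, ha⟩
    rw [← ha]
    show a • eb 0 = 0
    simp [eb, EuclideanSpace.single_apply]
  · intro h0
    have h1 : v 1 ≠ 0 := by
      intro h1
      apply hv
      ext i
      fin_cases i <;> simp_all
    refine ⟨Units.mk0 (v 1) h1, ?_⟩
    ext i
    fin_cases i <;>
      simp [eb, EuclideanSpace.single_apply, Units.smul_def, h0]

lemma unitRep_ne (x : PE) : unitRep x ≠ 0 := by
  have h1 : ‖x.rep‖⁻¹ ≠ 0 := inv_ne_zero (norm_ne_zero_iff.mpr x.rep_nonzero)
  exact smul_ne_zero h1 x.rep_nonzero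

lemma mk_unitRep (x : PE) :
    Projectivization.mk ℂ (unitRep x) (unitRep_ne x) = x := by
  have h : Projectivization.mk ℂ (unitRep x) (unitRep_ne x)
      = Projectivization.mk ℂ x.rep x.rep_nonzero := by
    rw [Projectivization.mk_eq_mk_iff']
    exact ⟨(‖x.rep‖⁻¹ : ℝ), by rw [Complex.coe_smul]; rfl⟩
  rw [h, Projectivization.mk_rep]

lemma unitRep_coords (x : PE) (hx : x ∉ ({eahat, ebhat} : Set PE)) :
    unitRep x 0 ≠ 0 ∧ unitRep x 1 ≠ 0 := by
  simp only [Set.mem_insert_iff, Set.mem_singleton_iff, not_or] at hx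
  constructor
  · intro h0
    exact hx.2 (by rw [← mk_unitRep x]; exact (mk_eq_ebhat_iff _ (unitRep_ne x)).2 h0)
  · intro h1
    exact hx.1 (by rw [← mk_unitRep x]; exact (mk_eq_eahat_iff _ (unitRep_ne x)).2 h1)

instance : T1Space PE := by
  refine ⟨fun x => ?_⟩
  letI : Setoid {v : E' // v ≠ 0} := projectivizationSetoid ℂ E'
  refine (isQuotientMap_quotient_mk' (X := {v : E' // v ≠ 0})).isClosed_preimage.1 ?_
  have hset : ((Quotient.mk' : {v : E' // v ≠ 0} → PE) ⁻¹' {x})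
      = Subtype.val ⁻¹' ((Submodule.span ℂ {x.rep} : Submodule ℂ E') : Set E') := by
    ext w
    simp only [Set.mem_preimage, Set.mem_singleton_iff, SetLike.mem_coe,
      Submodule.mem_span_singleton]
    constructor
    · intro h
      have h' : Projectivization.mk ℂ w.1 w.2 = Projectivization.mk ℂ x.rep x.rep_nonzero := by
        rw [Projectivization.mk_rep]; exact h
      obtain ⟨a, ha⟩ := (Projectivization.mk_eq_mk_iff ℂ _ _ _ _).1 h'
      exact ⟨a, ha⟩
    · rintro ⟨c, hc⟩
      have h' : Projectivization.mk ℂ w.1 w.2 = Projectivization.mk ℂ x.rep x.rep_nonzero :=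
        (Projectivization.mk_eq_mk_iff' ℂ _ _ _ _).2 ⟨c, hc⟩
      rw [Projectivization.mk_rep] at h'
      exact h'
  exact hset ▸ (Submodule.closed_of_finiteDimensional _).preimage continuous_subtype_val

lemma pairMeasurable : MeasurableSet ({eahat, ebhat} : Set PE) :=
  (measurableSet_singleton ebhat).insert eahat

lemma ksKernel_null (p : ℝ) (hp0 : 0 < p) (hp : p < 1 / 2)
    (x : PE) (hx : x ∉ ({eahat, ebhat} : Set PE)) :
    ksKernel p x ({eahat, ebhat} : Set PE) = 0 := by
  have hq0 : (0 : ℝ) < 1 - p := by linarith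
  have hsp : (Real.sqrt p : ℂ) ≠ 0 := by
    simp only [ne_eq, Complex.ofReal_eq_zero]
    exact Real.sqrt_ne_zero'.2 hp0
  have hsq : (Real.sqrt (1 - p) : ℂ) ≠ 0 := by
    simp only [ne_eq, Complex.ofReal_eq_zero]
    exact Real.sqrt_ne_zero'.2 hq0
  obtain ⟨h0, h1⟩ := unitRep_coords x hx
  have hw10 : (A1 p).mulVec (unitRep x) 0 = (Real.sqrt p : ℂ) * unitRep x 0 := by
    simp [A1, Matrix.mulVec, dotProduct, Fin.sum_univ_two]
  have hw11 : (A1 p).mulVec (unitRep x) 1 = (Real.sqrt (1 - p) : ℂ) * unitRep x 1 := by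
    simp [A1, Matrix.mulVec, dotProduct, Fin.sum_univ_two]
  have hw20 : (A2 p).mulVec (unitRep x) 0 = (Real.sqrt p : ℂ) * unitRep x 1 := by
    simp [A2, Matrix.mulVec, dotProduct, Fin.sum_univ_two]
  have hw21 : (A2 p).mulVec (unitRep x) 1 = (Real.sqrt (1 - p) : ℂ) * unitRep x 0 := by
    simp [A2, Matrix.mulVec, dotProduct, Fin.sum_univ_two]
  have hw1ne : (WithLp.toLp 2 ((A1 p).mulVec (unitRep x)) : E') ≠ 0 := by
    intro h
    exact (mul_ne_zero hsp h0) (by rw [← hw10]; exact congrArg (fun v : E' => v 0) h)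
  have hw2ne : (WithLp.toLp 2 ((A2 p).mulVec (unitRep x)) : E') ≠ 0 := by
    intro h
    exact (mul_ne_zero hsp h1) (by rw [← hw20]; exact congrArg (fun v : E' => v 0) h)
  have hy1 : mact (A1 p) x ∉ ({eahat, ebhat} : Set PE) := by
    rw [mact, dif_pos hw1ne]
    simp only [Set.mem_insert_iff, Set.mem_singleton_iff, not_or]
    constructor
    · rw [mk_eq_eahat_iff _ hw1ne, WithLp.ofLp_toLp, hw11]
      exact mul_ne_zero hsq h1
    · rw [mk_eq_ebhat_iff _ hw1ne, WithLp.ofLp_toLp, hw10]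
      exact mul_ne_zero hsp h0
  have hy2 : mact (A2 p) x ∉ ({eahat, ebhat} : Set PE) := by
    rw [mact, dif_pos hw2ne]
    simp only [Set.mem_insert_iff, Set.mem_singleton_iff, not_or]
    constructor
    · rw [mk_eq_eahat_iff _ hw2ne, WithLp.ofLp_toLp, hw21]
      exact mul_ne_zero hsq h0
    · rw [mk_eq_ebhat_iff _ hw2ne, WithLp.ofLp_toLp, hw20]
      exact mul_ne_zero hsp h1
  simp [ksKernel, Measure.dirac_apply, Set.indicator_of_notMem hy1,
    Set.indicator_of_notMem hy2]

lemma bind_null {X : Type*} [MeasurableSpace X] {μ : Measure X} {K : X → Measure X}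
    {S : Set X} (hS : MeasurableSet S) (hμ : μ S = 0)
    (hK : ∀ a ∉ S, K a S = 0) : μ.bind K S = 0 := by
  rw [Measure.bind]
  by_cases h : AEMeasurable K μ
  · rw [Measure.join_apply hS]
    have hmeas : MeasurableSet ((fun ν : Measure X => ν S) ⁻¹' {0}) :=
      (Measure.measurable_coe hS) (measurableSet_singleton 0)
    have hae : ∀ᵐ ν ∂(μ.map K), ν ∈ (fun ν : Measure X => ν S) ⁻¹' {0} := by
      refine (ae_map_iff (p := fun ν : Measure X => ν ∈ (fun ν : Measure X => ν S) ⁻¹' {0})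
        h hmeas).2 ?_
      filter_upwards [measure_eq_zero_iff_ae_notMem.mp hμ] with a ha
      show K a S ∈ ({0} : Set ENNReal)
      simp only [Set.mem_singleton_iff]
      exact hK a ha
    calc ∫⁻ ν, ν S ∂(μ.map K) = ∫⁻ _, 0 ∂(μ.map K) :=
          lintegral_congr_ae (hae.mono fun ν hν => by simpa using hν)
      _ = 0 := lintegral_zero
  · rw [Measure.join_apply hS, Measure.map_of_not_aemeasurable h, lintegral_zero_measure]

end Aux

/-- In the Keep-Switch model, for `g = 1_{{ê_a, ê_b}}` one has
`E_{ν_inv}(g) = 1`, yet for every `x̂ ∉ {ê_a, ê_b}` and every time `k`, `g(x̂_k) = 0`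
`P_x̂`-a.s. (hence `S_n(g) = 0` a.s. for every `n`): the LLN fails for this `L¹(ν_inv)`
function. -/
theorem keepSwitch_lln_fails (p : ℝ) (hp0 : 0 < p) (hp : p < 1 / 2)
    (g : Projectivization ℂ (EuclideanSpace ℂ (Fin 2)) → ℝ)
    (hgdef : g = Set.indicator
      ({eahat, ebhat} : Set (Projectivization ℂ (EuclideanSpace ℂ (Fin 2))))
      (fun _ => (1 : ℝ))) :
    (∫ x, g x ∂(ENNReal.ofReal p • Measure.dirac eahat
        + ENNReal.ofReal (1 - p) • Measure.dirac ebhat) = 1) ∧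
    (∀ x : Projectivization ℂ (EuclideanSpace ℂ (Fin 2)),
      x ∉ ({eahat, ebhat} : Set (Projectivization ℂ (EuclideanSpace ℂ (Fin 2)))) →
      ∀ k : ℕ, iterKer (ksKernel p) k (Measure.dirac x) {y | g y ≠ 0} = 0) := by
  have hq0 : (0 : ℝ) < 1 - p := by linarith
  have hSmeas := pairMeasurable
  have hgmeas : Measurable g := by
    rw [hgdef]
    exact measurable_const.indicator hSmeas
  constructor
  · haveI fin1 : IsFiniteMeasure
        (ENNReal.ofReal p • (Measure.dirac eahat :
          Measure (Projectivization ℂ (EuclideanSpace ℂ (Fin 2))))) :=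
      ⟨by simp [ENNReal.ofReal_lt_top]⟩
    haveI fin2 : IsFiniteMeasure
        (ENNReal.ofReal (1 - p) • (Measure.dirac ebhat :
          Measure (Projectivization ℂ (EuclideanSpace ℂ (Fin 2))))) :=
      ⟨by simp [ENNReal.ofReal_lt_top]⟩
    have int1 : Integrable g (ENNReal.ofReal p • Measure.dirac eahat) := by
      rw [hgdef]; exact (integrable_const (1 : ℝ)).indicator hSmeas
    have int2 : Integrable g (ENNReal.ofReal (1 - p) • Measure.dirac ebhat) := by
      rw [hgdef]; exact (integrable_const (1 : ℝ)).indicator hSmeas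
    rw [integral_add_measure int1 int2, integral_smul_measure, integral_smul_measure,
      integral_dirac, integral_dirac,
      ENNReal.toReal_ofReal hp0.le, ENNReal.toReal_ofReal hq0.le, hgdef]
    rw [Set.indicator_of_mem (by simp : eahat ∈ ({eahat, ebhat} : Set _)) (fun _ => (1 : ℝ)),
      Set.indicator_of_mem (by simp : ebhat ∈ ({eahat, ebhat} : Set _)) (fun _ => (1 : ℝ))]
    simp only [smul_eq_mul, mul_one]
    ring
  · intro x hx k
    have hg : {y | g y ≠ 0}
        = ({eahat, ebhat} : Set (Projectivization ℂ (EuclideanSpace ℂ (Fin 2)))) := by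
      ext y
      constructor
      · intro hy
        by_contra hmem
        exact hy (by rw [hgdef]; exact Set.indicator_of_notMem hmem _)
      · intro hy
        show g y ≠ 0
        rw [hgdef, Set.indicator_of_mem hy]
        exact one_ne_zero
    rw [hg]
    induction k with
    | zero =>
        show Measure.dirac x _ = 0
        rw [Measure.dirac_apply, Set.indicator_of_notMem hx]
    | succ n ih =>
        show (iterKer (ksKernel p) n (Measure.dirac x)).bind (ksKernel p) _ = 0
        exact bind_null hSmeas ih (fun a ha => ksKernel_null p hp0 hp a ha)
end

section
/- If a Markov kernel Π on a compact metric space satisfies W₁((1/m)∑_{r=0}^{m−1}νΠ^{mn+r}, ν_inv) ≤ Cλⁿ uniformly in ν, then for every α-Hölder g with E_{ν_inv}(g) = 0 the partial sums f_n^{(r)} = ∑_{k=0}^{nm+r−1} Π^k g form a uniformly Cauchy sequence: |f_p^{(r)}(x̂) − f_q^{(r)}(x̂)| ≤ mC' λ^{αp}/(1 − λ^α) for all p ≤ q and all x̂. -/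
open MeasureTheory

/-- Under the uniform geometric Wasserstein convergence hypothesis, for every
`α`-Hölder `g` with `E_{ν_inv}(g) = 0`, the partial sums `f_n^{(r)} = ∑_{k < nm+r} Π^k g`
satisfy the uniform Cauchy bound `|f_p^{(r)}(x̂) − f_q^{(r)}(x̂)| ≤ m C' λ^{αp}/(1 − λ^α)`
for all `p ≤ q` and all `x̂`, where `C'` is the constant from the uniform bound
`|(1/m)∑_{l<m} νΠ^{km+l} g| ≤ C' λ^{αk}`. -/
theorem partial_sums_uniformly_cauchy {X : Type*} [MetricSpace X] [CompactSpace X]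
    [MeasurableSpace X] [BorelSpace X]
    (K : X → Measure X) (hKprob : ∀ x, IsProbabilityMeasure (K x)) (hKmeas : Measurable K)
    (νinv : Measure X) [IsProbabilityMeasure νinv]
    (m : ℕ) (hm : 1 ≤ m) (lam : ℝ) (hlam0 : 0 < lam) (hlam1 : lam < 1)
    (C : ℝ) (hC : 0 < C)
    (hW : ∀ ν : Measure X, IsProbabilityMeasure ν → ∀ n : ℕ,
      W1 (((m : ENNReal))⁻¹ • ∑ r ∈ Finset.range m, iterKer K (m * n + r) ν) νinv
        ≤ C * lam ^ n)
    (g : X → ℂ) (α Kg : ℝ) (hα0 : 0 < α) (hα1 : α ≤ 1)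
    (hg : ∀ x y, ‖g x - g y‖ ≤ Kg * dist x y ^ α)
    (hgcentered : ∫ x, g x ∂νinv = 0)
    (C' : ℝ) (hC' : 0 < C')
    (hC'bound : ∀ ν : Measure X, IsProbabilityMeasure ν → ∀ k : ℕ,
      ‖(m : ℝ)⁻¹ • ∑ l ∈ Finset.range m, ∫ x, g x ∂(iterKer K (k * m + l) ν)‖
        ≤ C' * lam ^ (α * (k : ℝ))) :
    ∀ r < m, ∀ p q : ℕ, p ≤ q → ∀ x : X,
      ‖(∑ k ∈ Finset.range (p * m + r), ∫ y, g y ∂(iterKer K k (Measure.dirac x)))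
        - (∑ k ∈ Finset.range (q * m + r), ∫ y, g y ∂(iterKer K k (Measure.dirac x)))‖
        ≤ (m : ℝ) * C' * lam ^ (α * (p : ℝ)) / (1 - lam ^ α) := by

  -- iterKer preserves probability measures
  have hprob : ∀ (n : ℕ) (ν : Measure X), IsProbabilityMeasure ν →
      IsProbabilityMeasure (iterKer K n ν) := by
    intro n
    induction n with
    | zero => intro ν h; exact h
    | succ n ih =>
      intro ν h
      have hn := ih ν h
      constructor
      show (iterKer K n ν).bind K Set.univ = 1
      rw [Measure.bind_apply MeasurableSet.univ hKmeas.aemeasurable]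
      have h1 : ∀ y : X, K y Set.univ = 1 := fun y => (hKprob y).measure_univ
      simp [h1]
  -- additivity of iterKer
  have hadd : ∀ (a b : ℕ) (ν : Measure X),
      iterKer K (a + b) ν = iterKer K a (iterKer K b ν) := by
    intro a
    induction a with
    | zero => intro b ν; simp [iterKer]
    | succ a ih =>
      intro b ν
      have : a + 1 + b = (a + b) + 1 := by omega
      rw [this]
      show (iterKer K (a + b) ν).bind K = (iterKer K a (iterKer K b ν)).bind K
      rw [ih]
  intro r hr p q hpq x
  set a : ℕ → ℂ := fun k => ∫ y, g y ∂(iterKer K k (Measure.dirac x)) with ha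
  set xl : ℝ := lam ^ α with hxl
  have hx0 : 0 < xl := Real.rpow_pos_of_pos hlam0 α
  have hx1 : xl < 1 := Real.rpow_lt_one hlam0.le hlam1 hα0
  have hx1' : 0 < 1 - xl := by linarith
  have hrpow : ∀ j : ℕ, lam ^ (α * (j : ℝ)) = xl ^ j := by
    intro j
    rw [hxl, Real.rpow_mul hlam0.le, Real.rpow_natCast]
  -- block bound
  have hblock : ∀ j : ℕ, ‖∑ l ∈ Finset.range m, a (j * m + r + l)‖ ≤ (m : ℝ) * C' * xl ^ j := by
    intro j
    have hν : IsProbabilityMeasure (iterKer K r (Measure.dirac x)) :=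
      hprob r _ (by infer_instance)
    have hb := hC'bound (iterKer K r (Measure.dirac x)) hν j
    have hre : ∀ l : ℕ, a (j * m + r + l)
        = ∫ y, g y ∂(iterKer K (j * m + l) (iterKer K r (Measure.dirac x))) := by
      intro l
      have h : j * m + r + l = (j * m + l) + r := by omega
      show (∫ y, g y ∂(iterKer K (j * m + r + l) (Measure.dirac x))) = _
      rw [h, hadd (j * m + l) r]
    rw [Finset.sum_congr rfl (fun l _ => hre l)]
    have hm0 : (0 : ℝ) < (m : ℝ) := by exact_mod_cast hm
    rw [norm_smul, Real.norm_eq_abs, abs_inv, abs_of_pos hm0] at hb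
    rw [hrpow] at hb
    calc ‖∑ l ∈ Finset.range m, ∫ y, g y ∂(iterKer K (j * m + l) (iterKer K r (Measure.dirac x)))‖
        = (m : ℝ) * ((m : ℝ)⁻¹ * ‖∑ l ∈ Finset.range m, ∫ y, g y ∂(iterKer K (j * m + l) (iterKer K r (Measure.dirac x)))‖) := by
          field_simp
      _ ≤ (m : ℝ) * (C' * xl ^ j) := by
          apply mul_le_mul_of_nonneg_left hb hm0.le
      _ = (m : ℝ) * C' * xl ^ j := by ring
  -- telescoping
  have htel : ∀ q : ℕ, p ≤ q →
      (∑ k ∈ Finset.range (q * m + r), a k) - (∑ k ∈ Finset.range (p * m + r), a k)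
        = ∑ j ∈ Finset.Ico p q, (∑ l ∈ Finset.range m, a (j * m + r + l)) := by
    intro q hq
    induction q, hq using Nat.le_induction with
    | base => simp
    | succ q hq ih =>
      have h1 : q * m + r ≤ (q + 1) * m + r := by nlinarith
      have h2 : ∑ k ∈ Finset.range ((q + 1) * m + r), a k
          = (∑ k ∈ Finset.range (q * m + r), a k)
            + ∑ k ∈ Finset.Ico (q * m + r) ((q + 1) * m + r), a k := by
        rw [Finset.sum_Ico_eq_sub _ h1]
        ring
      have h3 : ∑ k ∈ Finset.Ico (q * m + r) ((q + 1) * m + r), a k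
          = ∑ l ∈ Finset.range m, a (q * m + r + l) := by
        rw [Finset.sum_Ico_eq_sum_range]
        have : (q + 1) * m + r - (q * m + r) = m := by
          have : (q + 1) * m = q * m + m := by ring
          omega
        rw [this]
      rw [h2, h3, Finset.sum_Ico_succ_top hq]
      linear_combination ih
  rw [← norm_neg, neg_sub, htel q hpq]
  -- geometric bound
  have hgeom : ∑ j ∈ Finset.Ico p q, xl ^ j ≤ xl ^ p / (1 - xl) := by
    rw [Finset.sum_Ico_eq_sum_range]
    have : ∀ i ∈ Finset.range (q - p), xl ^ (p + i) = xl ^ p * xl ^ i := by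
      intro i _; rw [pow_add]
    rw [Finset.sum_congr rfl this, ← Finset.mul_sum]
    have hsum : ∑ i ∈ Finset.range (q - p), xl ^ i ≤ 1 / (1 - xl) := by
      have heq : (xl ^ (q - p) - 1) / (xl - 1) = (1 - xl ^ (q - p)) / (1 - xl) := by
        have h : xl - 1 ≠ 0 := by linarith
        field_simp
        ring
      rw [geom_sum_eq (ne_of_lt hx1), heq, div_le_div_iff₀ hx1' hx1']
      nlinarith [pow_nonneg hx0.le (q - p)]
    calc xl ^ p * ∑ i ∈ Finset.range (q - p), xl ^ i
        ≤ xl ^ p * (1 / (1 - xl)) := by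
          apply mul_le_mul_of_nonneg_left hsum (pow_nonneg hx0.le _)
      _ = xl ^ p / (1 - xl) := by ring
  calc ‖∑ j ∈ Finset.Ico p q, (∑ l ∈ Finset.range m, a (j * m + r + l))‖
      ≤ ∑ j ∈ Finset.Ico p q, ‖∑ l ∈ Finset.range m, a (j * m + r + l)‖ :=
        norm_sum_le _ _
    _ ≤ ∑ j ∈ Finset.Ico p q, (m : ℝ) * C' * xl ^ j :=
        Finset.sum_le_sum (fun j _ => hblock j)
    _ = (m : ℝ) * C' * ∑ j ∈ Finset.Ico p q, xl ^ j := by rw [Finset.mul_sum]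
    _ ≤ (m : ℝ) * C' * (xl ^ p / (1 - xl)) := by
        apply mul_le_mul_of_nonneg_left hgeom
        positivity
    _ = (m : ℝ) * C' * lam ^ (α * (p : ℝ)) / (1 - lam ^ α) := by
        rw [hrpow p]; ring
end
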